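/- Let q ≥ 2 be a real number and let p ∈ (0,1) with p ≤ q^{-k} for some positive integer k, where p is a product p = ∏_{i=1}^k p_i with each p_i ∈ (0, 1/q]. Then ∏_{i=1}^k (2 p_i - p_i^2) ≤ p^{2/(2+ζ)}, where ζ = 2 ln(2 - 1/q) / (ln q - ln(2 - 1/q)). -/

import Mathlib

lemma key_aux (q x : ℝ) (hq : 2 ≤ q) (hx : 0 < x) (hxq : x ≤ 1 / q) :
    x * (2 - x) ≤ x ^ ((Real.log q - Real.log (2 - 1 / q)) / Real.log q) := by
  have hq0 : (0:ℝ) < q := by linarith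
  have h1q : (0:ℝ) < 1 / q := by positivity
  have hq' : 1 / q ≤ 1 / 2 := by
    rw [div_le_div_iff₀ hq0 two_pos]; linarith
  have hQ : 0 < Real.log q := Real.log_pos (by linarith)
  set t : ℝ := -Real.log x / Real.log q with ht
  have hlogx : Real.log x ≤ -Real.log q := by
    have h1 := Real.log_le_log hx hxq
    rwa [one_div, Real.log_inv] at h1
  have ht1 : 1 ≤ t := by
    rw [ht, le_div_iff₀ hQ]; linarith
  have hb0 : (0:ℝ) < 2 - 1 / q := by linarith
  have hbern : 1 + t * (1 - 1 / q) ≤ (2 - 1 / q) ^ t := by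
    have h := one_add_mul_self_le_rpow_one_add (by linarith : (-1:ℝ) ≤ 1 - 1 / q) ht1
    have : (1 : ℝ) + (1 - 1 / q) = 2 - 1 / q := by ring
    rwa [this] at h
  have hexp : 1 - (t - 1) * Real.log q ≤ Real.exp (-((t - 1) * Real.log q)) := by
    have := Real.add_one_le_exp (-((t - 1) * Real.log q)); linarith
  have hlq : Real.log q ≤ q - 1 := Real.log_le_sub_one_of_pos hq0
  have hxval : x = (1 / q) * Real.exp (-((t - 1) * Real.log q)) := by
    rw [← Real.exp_log h1q, ← Real.exp_add, ← Real.exp_log hx]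
    congr 1
    rw [one_div, Real.log_inv, ht]
    field_simp
    ring
  have h2x : 2 - x ≤ (2 - 1 / q) ^ t := by
    have h1 : (1 / q) * (1 - (t - 1) * Real.log q) ≤
        (1 / q) * Real.exp (-((t - 1) * Real.log q)) :=
      mul_le_mul_of_nonneg_left hexp h1q.le
    have h2 : (t - 1) * Real.log q ≤ (t - 1) * (q - 1) :=
      mul_le_mul_of_nonneg_left hlq (by linarith)
    have hqq : q * (1 / q) = 1 := mul_one_div_cancel hq0.ne'
    have h3 : 2 - (1 / q) * (1 - (t - 1) * Real.log q) ≤ 1 + t * (1 - 1 / q) := by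
      nlinarith [mul_le_mul_of_nonneg_left h2 h1q.le, h1q]
    have : 2 - x ≤ 1 + t * (1 - 1 / q) := by rw [hxval]; linarith
    linarith [hbern]
  have hrw : x ^ ((Real.log q - Real.log (2 - 1 / q)) / Real.log q)
      = x * (2 - 1 / q) ^ t := by
    rw [Real.rpow_def_of_pos hx, Real.rpow_def_of_pos hb0]
    nth_rewrite 2 [← Real.exp_log hx]
    rw [← Real.exp_add]
    congr 1
    rw [ht]
    field_simp
    ring
  rw [hrw]
  exact mul_le_mul_of_nonneg_left h2x hx.le

theorem stmt1 (q : ℝ) (hq : 2 ≤ q) (k : ℕ) (hk : 1 ≤ k) (p : ℕ → ℝ)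
    (hp : ∀ i ∈ Finset.range k, 0 < p i ∧ p i ≤ 1 / q) :
    (∏ i ∈ Finset.range k, (2 * p i - (p i) ^ 2)) ≤
      (∏ i ∈ Finset.range k, p i) ^
        (2 / (2 + 2 * Real.log (2 - 1 / q) / (Real.log q - Real.log (2 - 1 / q)))) := by
  have hq0 : (0:ℝ) < q := by linarith
  have hQ : 0 < Real.log q := Real.log_pos (by linarith)
  have hb1 : (1:ℝ) < 2 - 1 / q := by
    have : 1 / q ≤ 1 / 2 := by rw [div_le_div_iff₀ hq0 two_pos]; linarith
    linarith
  have hL : 0 < Real.log (2 - 1 / q) := Real.log_pos hb1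
  have hLQ : Real.log (2 - 1 / q) < Real.log q := by
    apply Real.log_lt_log (by linarith)
    have : 0 < 1 / q := by positivity
    linarith
  set L := Real.log (2 - 1 / q)
  set Q := Real.log q
  have hexp_eq : 2 / (2 + 2 * L / (Q - L)) = (Q - L) / Q := by
    have h1 : Q - L ≠ 0 := sub_ne_zero.2 hLQ.ne'
    have h2 : (2:ℝ) + 2 * L / (Q - L) = 2 * Q / (Q - L) := by
      field_simp; ring
    rw [h2]
    field_simp
  rw [hexp_eq]
  have hpos : ∀ i ∈ Finset.range k, 0 ≤ p i := fun i hi => (hp i hi).1.le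
  rw [← Real.finset_prod_rpow _ _ hpos]
  apply Finset.prod_le_prod
  · intro i hi
    obtain ⟨h1, h2⟩ := hp i hi
    have : p i ≤ 1 / 2 := le_trans h2 (by rw [div_le_div_iff₀ hq0 two_pos]; linarith)
    nlinarith
  · intro i hi
    obtain ⟨h1, h2⟩ := hp i hi
    have := key_aux q (p i) hq h1 h2
    calc 2 * p i - (p i) ^ 2 = p i * (2 - p i) := by ring
      _ ≤ _ := this
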